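/- arXiv:2604.27366 — 3 statements merged into one kernel-verified Lean document; each statement's English description precedes it below -/
import Mathlib

section
/- If Q is L_Q-Lipschitz on a metric space (A,d), C is L_C-Lipschitz, the critic satisfies Q(C(a)) - Q(a) ≥ β(Q* - Q(a)) for all a in a finite nonempty set T, and Q(a) ≤ Q* for all a, then for any A₀ with ρ₀ = min_{a∈T} d(A₀,a), we have Q(C(A₀)) ≥ β·Q* + (1-β)·Q(A₀) - ρ₀·L_Q·(1-β+L_C). -/
theorem stmt0 {α : Type*} [MetricSpace α]
    (Q : α → ℝ) (Qstar : ℝ) (C : α → α) (β LQ LC : ℝ)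
    (hβ : β ∈ Set.Ioo (0:ℝ) 1) (hLQ : 0 < LQ) (hLC : 0 < LC)
    (hQlip : ∀ x y : α, |Q x - Q y| ≤ LQ * dist x y)
    (hClip : ∀ x y : α, dist (C x) (C y) ≤ LC * dist x y)
    (T : Finset α) (hT : T.Nonempty)
    (himp : ∀ a ∈ T, Q (C a) - Q a ≥ β * (Qstar - Q a))
    (hub : ∀ a : α, Q a ≤ Qstar)
    (A₀ : α) :
    Q (C A₀) ≥ β * Qstar + (1 - β) * Q A₀
      - (T.inf' hT fun a => dist A₀ a) * LQ * (1 - β + LC) := by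
  obtain ⟨a, haT, ha⟩ := T.exists_mem_eq_inf' hT fun a => dist A₀ a
  rw [ha]
  have h1 := abs_le.1 (hQlip (C A₀) (C a))
  have h2 := abs_le.1 (hQlip A₀ a)
  have h3 := hClip A₀ a
  have h4 := himp a haT
  obtain ⟨hβ0, hβ1⟩ := hβ
  nlinarith [dist_nonneg (x := A₀) (y := a)]
end

section
/- Under the same assumptions as Theorem 1, define the sequence A_{k+1} = C(A_k) and ρ_k = min_{a∈T} d(A_k, a). If for each k, ρ_k ≤ (β / (L_Q(1-β+L_C)))·(Q* - Q(A_k)), then the sequence Q(A_k) is monotonically nondecreasing. -/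
theorem stmt1 {α : Type*} [MetricSpace α]
    (Q : α → ℝ) (Qstar : ℝ) (C : α → α) (β LQ LC : ℝ)
    (hβ : β ∈ Set.Ioo (0:ℝ) 1) (hLQ : 0 < LQ) (hLC : 0 < LC)
    (hQlip : ∀ x y : α, |Q x - Q y| ≤ LQ * dist x y)
    (hClip : ∀ x y : α, dist (C x) (C y) ≤ LC * dist x y)
    (T : Finset α) (hT : T.Nonempty)
    (himp : ∀ a ∈ T, Q (C a) - Q a ≥ β * (Qstar - Q a))
    (hub : ∀ a : α, Q a ≤ Qstar)
    (A : ℕ → α) (hrec : ∀ k, A (k + 1) = C (A k))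
    (hρ : ∀ k, (T.inf' hT fun a => dist (A k) a)
      ≤ (β / (LQ * (1 - β + LC))) * (Qstar - Q (A k))) :
    ∀ k, Q (A k) ≤ Q (A (k + 1)) := by
  intro k
  obtain ⟨hβ0, hβ1⟩ := hβ
  obtain ⟨a, haT, ha⟩ := T.exists_mem_eq_inf' hT fun a => dist (A k) a
  set ρ : ℝ := T.inf' hT fun a => dist (A k) a with hρdef
  have hρk := hρ k
  have hρnn : (0:ℝ) ≤ ρ := by rw [ha]; exact dist_nonneg
  -- Q a ≥ Q (A k) - LQ * ρ
  have h1 : |Q (A k) - Q a| ≤ LQ * ρ := by rw [ha]; exact hQlip _ _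
  have h1' : Q (A k) - Q a ≤ LQ * ρ := (abs_le.mp h1).2
  -- Q (C (A k)) ≥ Q (C a) - LQ * LC * ρ
  have h2 : |Q (C a) - Q (C (A k))| ≤ LQ * (LC * ρ) := by
    calc |Q (C a) - Q (C (A k))| ≤ LQ * dist (C a) (C (A k)) := hQlip _ _
      _ ≤ LQ * (LC * ρ) := by
          have := hClip a (A k)
          rw [dist_comm (A k) a] at ha
          rw [ha]
          nlinarith [dist_nonneg (x := C a) (y := C (A k))]
  have h2' : Q (C a) - Q (C (A k)) ≤ LQ * (LC * ρ) := (abs_le.mp h2).2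
  have h3 := himp a haT
  -- from hρk: ρ * (LQ * (1 - β + LC)) ≤ β * (Qstar - Q (A k))
  have hpos : 0 < LQ * (1 - β + LC) := by nlinarith
  have h4 : ρ * (LQ * (1 - β + LC)) ≤ β * (Qstar - Q (A k)) := by
    rw [div_mul_eq_mul_div] at hρk
    exact (le_div_iff₀ hpos).mp hρk
  rw [hrec k]
  nlinarith [hub (A k)]
end

section
/- If the critic improvement holds with ratio β on T and Q(a) ≤ Q* for all a, then for any A₀ whose distance ρ₀ to T satisfies ρ₀ < β·(Q* - Q(A₀)) / (L_Q·(1-β+L_C)), the one-step refinement strictly improves the value: Q(C(A₀)) > Q(A₀), provided Q(A₀) < Q*. -/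
theorem stmt14 {α : Type*} [MetricSpace α]
    (Q : α → ℝ) (Qstar : ℝ) (C : α → α) (β LQ LC : ℝ)
    (hβ : β ∈ Set.Ioo (0:ℝ) 1) (hLQ : 0 < LQ) (hLC : 0 < LC)
    (hub : ∀ a : α, Q a ≤ Qstar)
    (hQlip : ∀ x y : α, |Q x - Q y| ≤ LQ * dist x y)
    (hClip : ∀ x y : α, dist (C x) (C y) ≤ LC * dist x y)
    (T : Finset α) (hT : T.Nonempty)
    (himp : ∀ a ∈ T, Q (C a) - Q a ≥ β * (Qstar - Q a))
    (A₀ : α)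
    (hρ : (T.inf' hT fun a => dist A₀ a)
      < β * (Qstar - Q A₀) / (LQ * (1 - β + LC)))
    (hlt : Q A₀ < Qstar) :
    Q (C A₀) > Q A₀ := by
  obtain ⟨a, ha, hinf⟩ := T.exists_mem_eq_inf' hT (fun a => dist A₀ a)
  rw [hinf] at hρ
  have h1 := himp a ha
  have h2 := abs_le.mp (hQlip A₀ a)
  have h3 := hClip A₀ a
  have h4 := abs_le.mp (hQlip (C A₀) (C a))
  obtain ⟨hβ0, hβ1⟩ := hβ
  have hden : 0 < LQ * (1 - β + LC) := mul_pos hLQ (by linarith)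
  have hρ' : dist A₀ a * (LQ * (1 - β + LC)) < β * (Qstar - Q A₀) :=
    (lt_div_iff₀ hden).mp hρ
  have hd0 : (0:ℝ) ≤ dist A₀ a := dist_nonneg
  nlinarith [h2.1, h2.2, h4.1, h4.2, mul_le_mul_of_nonneg_left h3 hLQ.le]
end
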